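/- Let (s^k) and (s̃^{k+1}) be F_k-measurable Borel random vectors in Y with the update rule s_i^{k+1} = s̃_i^{k+1} if i = i_k and s_i^{k+1} = s_i^k otherwise. Then for any continuous φ: Y_i → ℝ (with the relevant expectations finite) and any k ≥ 0, E[φ(s_i^{k+1})] = E[ Σ_{j=0}^{k} p_i (1−p_i)^j φ(s̃_i^{k+1−j}) ] + (1−p_i)^{k+1} φ(s_i^0). -/

import Mathlib

open MeasureTheory ProbabilityTheory
open scoped RealInnerProductSpace

private lemma meas_pi {Ω : Type*} (mΩ : MeasurableSpace Ω) {δ : Type*} {π : δ → Type*}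
    [∀ a, MeasurableSpace (π a)] (f : Ω → ∀ a, π a)
    (hf : ∀ a, Measurable[mΩ] fun ω => f ω a) : Measurable[mΩ] f :=
  measurable_pi_lambda f hf

private lemma meas_ite {Ω β : Type*} (mΩ : MeasurableSpace Ω) [MeasurableSpace β]
    {c : Ω → Prop} [DecidablePred c] (hc : MeasurableSet[mΩ] {ω | c ω})
    {f g : Ω → β} (hf : Measurable[mΩ] f) (hg : Measurable[mΩ] g) :
    Measurable[mΩ] (fun ω => if c ω then f ω else g ω) :=
  Measurable.ite hc hf hg

/-- **Lemma 4.3 (i).** For the block-coordinate update rule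
`s_i^{k+1} = s̃_i^{k+1}` if `i = i_k` and `s_i^{k+1} = s_i^k` otherwise, driven by
i.i.d. indices `(i_k)` with `P(i_k = i) = p_i`, and with `s̃^{k+1}` being
`𝔉_k`-measurable and `s^0` deterministic, one has for any continuous `φ : Y_i → ℝ`
(with all relevant expectations finite):
`𝔼[φ(s_i^{k+1})] = 𝔼[Σ_{j=0}^{k} p_i (1−p_i)^j φ(s̃_i^{k+1−j})] + (1−p_i)^{k+1} φ(s_i^0)`. -/
theorem stmt_12
    {n : ℕ} {E : Fin n → Type*} [∀ i, NormedAddCommGroup (E i)]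
    [∀ i, InnerProductSpace ℝ (E i)] [∀ i, CompleteSpace (E i)]
    [∀ i, SecondCountableTopology (E i)]
    [∀ i, MeasurableSpace (E i)] [∀ i, BorelSpace (E i)]
    {Ω : Type*} [MeasurableSpace Ω] (μ : MeasureTheory.Measure Ω)
    [IsProbabilityMeasure μ]
    -- i.i.d. index selection variables
    (idx : ℕ → Ω → Fin n) (hidxmeas : ∀ k, Measurable (idx k))
    (p : Fin n → ℝ) (hp : ∀ i, p i ∈ Set.Ioo (0 : ℝ) 1) (hpsum : ∑ i, p i = 1)
    (hident : ∀ k i, μ {ω | idx k ω = i} = ENNReal.ofReal (p i))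
    (hindep : iIndepFun idx μ)
    -- the filtration generated by `i_0, …, i_{k−1}`
    (ℱ : ℕ → MeasurableSpace Ω)
    (hℱ : ∀ k, ℱ k = ⨆ j ∈ Finset.range k, MeasurableSpace.comap (idx j) ⊤)
    -- the update rule
    (s stilde : ℕ → Ω → ∀ i, E i)
    (s0 : ∀ i, E i) (hs0 : ∀ ω, s 0 ω = s0)
    (hstilde_meas : ∀ k, Measurable[ℱ k] (stilde (k + 1)))
    (hupd : ∀ k ω i', s (k + 1) ω i' = if idx k ω = i' then stilde (k + 1) ω i'
        else s k ω i')
    -- a fixed block `i` and a continuous test function `φ` with finite expectations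
    (i : Fin n) (φ : E i → ℝ) (hφ : Continuous φ)
    (hint : ∀ m, Integrable (fun ω => φ (stilde (m + 1) ω i)) μ)
    (hint' : ∀ m, Integrable (fun ω => φ (s m ω i)) μ)
    (k : ℕ) :
    ∫ ω, φ (s (k + 1) ω i) ∂μ
      = (∫ ω, ∑ j ∈ Finset.range (k + 1),
            p i * (1 - p i) ^ j * φ (stilde (k + 1 - j) ω i) ∂μ)
        + (1 - p i) ^ (k + 1) * φ (s0 i) := by
  have hp0 := (hp i).1
  have hp1 := (hp i).2
  -- sub-σ-algebra facts
  have hle : ∀ j, MeasurableSpace.comap (idx j) ⊤ ≤ ‹MeasurableSpace Ω› :=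
    fun j => (hidxmeas j).comap_le
  have hFle : ∀ m, ℱ m ≤ ‹MeasurableSpace Ω› := by
    intro m
    rw [hℱ m]
    exact iSup_le fun j => iSup_le fun _ => hle j
  have hFmono : ∀ a b, a ≤ b → ℱ a ≤ ℱ b := by
    intro a b hab
    rw [hℱ a, hℱ b]
    exact iSup_le fun j => iSup_le fun hj =>
      le_iSup₂ (f := fun j (_ : j ∈ Finset.range b) => MeasurableSpace.comap (idx j) ⊤) j
        (Finset.mem_range.mpr (lt_of_lt_of_le (Finset.mem_range.mp hj) hab))
  -- independence of ℱ m and σ(idx m)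
  have hiI : iIndep (fun j => MeasurableSpace.comap (idx j) ⊤) μ :=
    (iIndepFun_iff_iIndep _ _ _).mp hindep
  have hIndep : ∀ m, Indep (ℱ m) (MeasurableSpace.comap (idx m) ⊤) μ := by
    intro m
    have h := indep_biSup_compl hle hiI {j | j < m}
    refine indep_of_indep_of_le_right (indep_of_indep_of_le_left h ?_) ?_
    · rw [hℱ m]
      exact iSup_le fun j => iSup_le fun hj =>
        le_iSup₂ (f := fun j (_ : j ∈ {j | j < m}) => MeasurableSpace.comap (idx j) ⊤) j
          (Finset.mem_range.mp hj)
    · exact le_iSup₂ (f := fun j (_ : j ∈ {j | j < m}ᶜ) => MeasurableSpace.comap (idx j) ⊤) m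
        (by simp)
  -- measurability of s m w.r.t. ℱ m
  have hsmeas : ∀ m, Measurable[ℱ m] (s m) := by
    intro m
    induction m with
    | zero =>
      have h : s 0 = fun _ => s0 := funext hs0
      rw [h]; exact measurable_const
    | succ m ih =>
      have h1 : Measurable[ℱ (m + 1)] (s m) := ih.mono (hFmono m (m + 1) (Nat.le_succ m)) le_rfl
      have h2 : Measurable[ℱ (m + 1)] (stilde (m + 1)) :=
        (hstilde_meas m).mono (hFmono m (m + 1) (Nat.le_succ m)) le_rfl
      have hidxF : Measurable[ℱ (m + 1)] (idx m) := by
        refine Measurable.of_comap_le ?_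
        rw [hℱ (m + 1)]
        exact le_iSup₂ (f := fun j (_ : j ∈ Finset.range (m + 1)) =>
          MeasurableSpace.comap (idx j) ⊤) m (Finset.mem_range.mpr (Nat.lt_succ_self m))
      refine meas_pi (ℱ (m + 1)) _ fun i' => ?_
      have h : (fun ω => s (m + 1) ω i')
          = fun ω => if idx m ω = i' then stilde (m + 1) ω i' else s m ω i' :=
        funext fun ω => hupd m ω i'
      rw [h]
      exact meas_ite (ℱ (m + 1)) (hidxF (measurableSet_singleton i'))
        ((measurable_pi_apply i').comp h2) ((measurable_pi_apply i').comp h1)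
  -- one-step recursion
  have step : ∀ m, ∫ ω, φ (s (m + 1) ω i) ∂μ
      = p i * (∫ ω, φ (stilde (m + 1) ω i) ∂μ) + (1 - p i) * ∫ ω, φ (s m ω i) ∂μ := by
    intro m
    set A : Set Ω := idx m ⁻¹' {i} with hAdef
    have hAmeas : MeasurableSet A := hidxmeas m (measurableSet_singleton i)
    have hAc : MeasurableSet[MeasurableSpace.comap (idx m) ⊤] A := ⟨{i}, trivial, rfl⟩
    set F : Ω → ℝ := fun ω => φ (stilde (m + 1) ω i) with hFdef
    set G : Ω → ℝ := fun ω => φ (s m ω i) with hGdef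
    have hFmeas : Measurable[ℱ m] F :=
      hφ.measurable.comp ((measurable_pi_apply i).comp (hstilde_meas m))
    have hGmeas : Measurable[ℱ m] G :=
      hφ.measurable.comp ((measurable_pi_apply i).comp (hsmeas m))
    have hμA : (μ A).toReal = p i := by
      have : μ A = ENNReal.ofReal (p i) := hident m i
      rw [this, ENNReal.toReal_ofReal hp0.le]
    have hμAc : (μ Aᶜ).toReal = 1 - p i := by
      have hA' : μ A = ENNReal.ofReal (p i) := hident m i
      rw [measure_compl hAmeas (measure_ne_top μ A), measure_univ, hA',
        ENNReal.toReal_sub_of_le (ENNReal.ofReal_le_one.mpr hp1.le) ENNReal.one_ne_top,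
        ENNReal.toReal_one, ENNReal.toReal_ofReal hp0.le]
    set g : Ω → ℝ := A.indicator (fun _ => 1) with hgdef
    set g' : Ω → ℝ := Aᶜ.indicator (fun _ => 1) with hg'def
    have hgmeas : Measurable[MeasurableSpace.comap (idx m) ⊤] g :=
      measurable_const.indicator hAc
    have hg'meas : Measurable[MeasurableSpace.comap (idx m) ⊤] g' :=
      measurable_const.indicator hAc.compl
    have hg_int : ∫ ω, g ω ∂μ = p i := by
      rw [hgdef, integral_indicator_const (1 : ℝ) hAmeas, smul_eq_mul, measureReal_def, hμA, mul_one]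
    have hg'_int : ∫ ω, g' ω ∂μ = 1 - p i := by
      rw [hg'def, integral_indicator_const (1 : ℝ) hAmeas.compl, smul_eq_mul, measureReal_def, hμAc, mul_one]
    have hIndF : IndepFun g F μ :=
      (IndepFun_iff_Indep _ _ _).mpr
        (indep_of_indep_of_le_right
          (indep_of_indep_of_le_left (hIndep m).symm hgmeas.comap_le) hFmeas.comap_le)
    have hIndG : IndepFun g' G μ :=
      (IndepFun_iff_Indep _ _ _).mpr
        (indep_of_indep_of_le_right
          (indep_of_indep_of_le_left (hIndep m).symm hg'meas.comap_le) hGmeas.comap_le)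
    have hgAE : AEStronglyMeasurable g μ :=
      (hgmeas.mono (hle m) le_rfl).aestronglyMeasurable
    have hg'AE : AEStronglyMeasurable g' μ :=
      (hg'meas.mono (hle m) le_rfl).aestronglyMeasurable
    have hFAE : AEStronglyMeasurable F μ := (hFmeas.mono (hFle m) le_rfl).aestronglyMeasurable
    have hGAE : AEStronglyMeasurable G μ := (hGmeas.mono (hFle m) le_rfl).aestronglyMeasurable
    have e1 : ∫ ω, A.indicator F ω ∂μ = p i * ∫ ω, F ω ∂μ := by
      have h : (fun ω => A.indicator F ω) = fun ω => g ω * F ω := by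
        funext ω
        by_cases h : ω ∈ A
        · simp [hgdef, Set.indicator_of_mem h]
        · simp [hgdef, Set.indicator_of_notMem h]
      rw [h, hIndF.integral_fun_mul_eq_mul_integral hgAE hFAE, hg_int]
    have e2 : ∫ ω, Aᶜ.indicator G ω ∂μ = (1 - p i) * ∫ ω, G ω ∂μ := by
      have h : (fun ω => Aᶜ.indicator G ω) = fun ω => g' ω * G ω := by
        funext ω
        by_cases h : ω ∈ Aᶜ
        · simp [hg'def, Set.indicator_of_mem h]
        · simp [hg'def, Set.indicator_of_notMem h]
      rw [h, hIndG.integral_fun_mul_eq_mul_integral hg'AE hGAE, hg'_int]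
    have hsplit : ∀ ω, φ (s (m + 1) ω i) = A.indicator F ω + Aᶜ.indicator G ω := by
      intro ω
      by_cases h : ω ∈ A
      · have hidx : idx m ω = i := h
        rw [Set.indicator_of_mem h, Set.indicator_of_notMem (Set.notMem_compl_iff.mpr h),
          add_zero, hupd m ω i, if_pos hidx]
      · have hidx : ¬ idx m ω = i := h
        rw [Set.indicator_of_notMem h,
          Set.indicator_of_mem (Set.mem_compl h), zero_add, hupd m ω i, if_neg hidx]
    calc ∫ ω, φ (s (m + 1) ω i) ∂μ
        = ∫ ω, (A.indicator F ω + Aᶜ.indicator G ω) ∂μ := by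
          exact integral_congr_ae (Filter.Eventually.of_forall hsplit)
      _ = (∫ ω, A.indicator F ω ∂μ) + ∫ ω, Aᶜ.indicator G ω ∂μ :=
          integral_add ((hint m).indicator hAmeas) ((hint' m).indicator hAmeas.compl)
      _ = p i * (∫ ω, F ω ∂μ) + (1 - p i) * ∫ ω, G ω ∂μ := by rw [e1, e2]
  -- the closed formula, by induction
  set I : ℕ → ℝ := fun m => ∫ ω, φ (stilde (m + 1) ω i) ∂μ with hIdef
  have claim : ∀ k, ∫ ω, φ (s (k + 1) ω i) ∂μ
      = (∑ j ∈ Finset.range (k + 1), p i * (1 - p i) ^ j * I (k - j))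
        + (1 - p i) ^ (k + 1) * φ (s0 i) := by
    intro k
    induction k with
    | zero =>
      have h0 : ∫ ω, φ (s 0 ω i) ∂μ = φ (s0 i) := by simp [hs0]
      rw [step 0, h0]
      simp [hIdef]
    | succ k ih =>
      rw [step (k + 1), ih]
      conv_rhs => rw [Finset.sum_range_succ']
      have hsum : ∑ j ∈ Finset.range (k + 1), (1 - p i) * (p i * (1 - p i) ^ j * I (k - j))
          = ∑ j ∈ Finset.range (k + 1), p i * (1 - p i) ^ (j + 1) * I (k + 1 - (j + 1)) := by
        refine Finset.sum_congr rfl fun j _ => ?_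
        rw [Nat.succ_sub_succ]
        ring
      rw [mul_add, Finset.mul_sum, hsum]
      simp only [pow_zero, Nat.sub_zero]
      ring
  -- convert the sum of integrals into the integral of the sum
  have hintsum : ∫ ω, (∑ j ∈ Finset.range (k + 1),
        p i * (1 - p i) ^ j * φ (stilde (k + 1 - j) ω i)) ∂μ
      = ∑ j ∈ Finset.range (k + 1), p i * (1 - p i) ^ j * I (k - j) := by
    rw [integral_finset_sum]
    · refine Finset.sum_congr rfl fun j hj => ?_
      have hj' : k + 1 - j = (k - j) + 1 := by
        have := Finset.mem_range.mp hj; omega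
      rw [hj', integral_const_mul]
    · intro j hj
      have hj' : k + 1 - j = (k - j) + 1 := by
        have := Finset.mem_range.mp hj; omega
      simp_rw [hj']
      exact (hint (k - j)).const_mul _
  rw [claim k, hintsum]
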